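/- For every integer n ≥ 3 there exists a finite set R ⊂ ℝ such that for all nonzero real numbers a, b with a/b ∉ R, the degree of 𝓑_{a,b}^n (as a polynomial in X) equals (n²−1)/4 if n is odd and n²/4 − 1 if n is even. -/
import Mathlib

open Polynomial Finset

/-- Number of `±1`-step paths of `s` steps starting at height `0`, staying `≥ 0`,
ending at height `h`. -/
def pathCount : ℕ → ℕ → ℕ
  | 0, 0 => 1
  | 0, _+1 => 0
  | s+1, 0 => pathCount s 1
  | s+1, h+1 => pathCount s h + pathCount s (h+2)

lemma pathCount_eq_zero : ∀ s h, s < h → pathCount s h = 0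
  | 0, _+1, _ => rfl
  | s+1, h+1, hlt => by
      simp only [pathCount]
      rw [pathCount_eq_zero s h (by omega), pathCount_eq_zero s (h+2) (by omega)]

lemma pathCount_diag : ∀ s, pathCount s s = 1
  | 0 => rfl
  | s+1 => by
      simp only [pathCount]
      rw [pathCount_diag s, pathCount_eq_zero s (s+2) (by omega)]

lemma pathCount_swap (s t K : ℕ) (hs : s ≤ K) (ht : t ≤ K) :
    ∑ h ∈ range (K+1), pathCount (s+1) h * pathCount t h =
    ∑ h ∈ range (K+1), pathCount s h * pathCount (t+1) h := by
  have key : ∀ x y : ℕ, x ≤ K → y ≤ K →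
      ∑ h ∈ range (K+1), pathCount (x+1) h * pathCount y h =
      ∑ h ∈ range (K+1), pathCount x h * pathCount y (h+1)
        + ∑ h ∈ range (K+1), pathCount x (h+1) * pathCount y h := by
    intro x y hx hy
    rw [Finset.sum_range_succ' (fun h => pathCount (x+1) h * pathCount y h)]
    rw [Finset.sum_range_succ (fun h => pathCount x h * pathCount y (h+1))]
    rw [Finset.sum_range_succ' (fun h => pathCount x (h+1) * pathCount y h)]
    simp only [pathCount]
    rw [pathCount_eq_zero y (K+1) (by omega)]
    simp only [show ∀ k:ℕ, k+1+1 = k+2 from fun _ => rfl, show (0:ℕ)+1 = 1 from rfl,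
      add_mul, mul_zero, zero_mul, add_zero, Finset.sum_add_distrib]
    ring
  rw [key s t hs ht]
  rw [show ∑ h ∈ range (K+1), pathCount s h * pathCount (t+1) h
      = ∑ h ∈ range (K+1), pathCount (t+1) h * pathCount s h from
    Finset.sum_congr rfl fun h _ => mul_comm _ _]
  rw [key t s ht hs, add_comm]
  congr 1 <;> exact Finset.sum_congr rfl fun h _ => mul_comm _ _

lemma pathCount_gram : ∀ s t K, s + t ≤ K →
    ∑ h ∈ range (K+1), pathCount s h * pathCount t h = pathCount (s+t) 0
  | 0, t, K, _ => by
      rw [Finset.sum_eq_single_of_mem 0 (Finset.mem_range.mpr (by omega))]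
      · simp only [pathCount, one_mul, zero_add]
      · intro h _ hne
        obtain ⟨h', rfl⟩ : ∃ h', h = h'+1 := ⟨h-1, by omega⟩
        simp only [pathCount, zero_mul]
  | s+1, t, K, hle => by
      rw [pathCount_swap s t K (by omega) (by omega),
        pathCount_gram s (t+1) K (by omega)]
      congr 1
      omega

lemma pathCount_closed : ∀ s h m, s + h = 2*m →
    (pathCount s h : ℤ) = (s.choose m : ℤ) - (s.choose (m+1) : ℤ)
  | 0, h, m, heq => by
      match m, heq with
      | 0, heq =>
        have : h = 0 := by omega
        subst this
        simp [pathCount]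
      | m'+1, heq =>
        obtain ⟨h', rfl⟩ : ∃ h', h = h'+1 := ⟨h-1, by omega⟩
        simp [pathCount, Nat.choose_eq_zero_of_lt]
  | s+1, 0, m, heq => by
      obtain ⟨m', rfl⟩ : ∃ m', m = m'+1 := ⟨m-1, by omega⟩
      have hs : s = 2*m'+1 := by omega
      have ih := pathCount_closed s 1 (m'+1) (by omega)
      show (pathCount s 1 : ℤ) = _
      rw [ih]
      have p1 : (s+1).choose (m'+1) = s.choose m' + s.choose (m'+1) :=
        Nat.choose_succ_succ s m'
      have p2 : (s+1).choose (m'+2) = s.choose (m'+1) + s.choose (m'+2) :=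
        Nat.choose_succ_succ s (m'+1)
      have hsym : s.choose (m'+1) = s.choose m' := by
        rw [hs]; exact Nat.choose_symm_half m'
      rw [p1, p2]
      push_cast
      rw [hsym]
      ring
  | s+1, h+1, m, heq => by
      obtain ⟨m', rfl⟩ : ∃ m', m = m'+1 := ⟨m-1, by omega⟩
      have ih1 := pathCount_closed s h m' (by omega)
      have ih2 := pathCount_closed s (h+2) (m'+1) (by omega)
      show ((pathCount s h + pathCount s (h+2) : ℕ) : ℤ) = _
      push_cast
      rw [ih1, ih2]
      have p1 : (s+1).choose (m'+1) = s.choose m' + s.choose (m'+1) :=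
        Nat.choose_succ_succ s m'
      have p2 : (s+1).choose (m'+2) = s.choose (m'+1) + s.choose (m'+2) :=
        Nat.choose_succ_succ s (m'+1)
      rw [p1, p2]
      push_cast
      ring




/-- The k-th Taylor coefficient of √(1+t) at t = 0:
`c k = (−1)^(k+1)·(2k choose k)/(4^k·(2k−1))` (note `2k−1 = −1` when `k = 0`, so `c 0 = 1`). -/
noncomputable def sqrtCoeff (k : ℕ) : ℚ :=
  (-1) ^ (k + 1) * (Nat.choose (2 * k) k : ℚ) / (4 ^ k * (2 * (k : ℚ) - 1))

/-- The polynomial `B_k^{a,b} = Σ_{u+v+w=k} c_u c_v c_w · a^{−u} b^{−v} · (a−X)^u (b−X)^v`. -/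
noncomputable def Bpoly (a b : ℝ) (k : ℕ) : Polynomial ℝ :=
  ∑ u ∈ Finset.range (k + 1), ∑ v ∈ Finset.range (k + 1 - u),
    Polynomial.C ((sqrtCoeff u : ℝ) * (sqrtCoeff v : ℝ) * (sqrtCoeff (k - u - v) : ℝ)
        * a⁻¹ ^ u * b⁻¹ ^ v) *
      (Polynomial.C a - Polynomial.X) ^ u * (Polynomial.C b - Polynomial.X) ^ v

/-- Cayley's determinant `𝓑_{a,b}^n`: for odd `n = 2m+1` it is the determinant of the
`m×m` matrix with `(i,j)` entry `B_{i+j}` (`1 ≤ i,j ≤ m`); for even `n = 2m` it is the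
determinant of the `(m−1)×(m−1)` matrix with `(i,j)` entry `B_{i+j+1}` (`1 ≤ i,j ≤ m−1`). -/
noncomputable def cayleyPoly (a b : ℝ) (n : ℕ) : Polynomial ℝ :=
  if Odd n then
    Matrix.det (Matrix.of fun i j : Fin (n / 2) => Bpoly a b (i.val + j.val + 2))
  else
    Matrix.det (Matrix.of fun i j : Fin (n / 2 - 1) => Bpoly a b (i.val + j.val + 3))

lemma sqrtCoeff_zero : sqrtCoeff 0 = 1 := by norm_num [sqrtCoeff]

lemma choose_key (k : ℕ) : ((2*k+2).choose (k+1) : ℚ)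
    = 2*(2*k+1)*(((2*k).choose k : ℚ) - ((2*k).choose (k+1) : ℚ)) := by
  have h1 : ((2*k).choose (k+1) : ℚ) * (k+1) = ((2*k).choose k : ℚ) * k := by
    have h := Nat.choose_succ_right_eq (2*k) k
    rw [show 2*k - k = k by omega] at h
    exact_mod_cast h
  have h2 : ((2*k+1).choose (k+1) : ℚ) * (k+1) = (2*(k:ℚ)+1) * ((2*k).choose k : ℚ) := by
    have h := Nat.add_one_mul_choose_eq (2*k) k
    have h' : (2*k+1) * (2*k).choose k = (2*k+1).choose (k+1) * (k+1) := by
      simpa [Nat.succ_eq_add_one] using h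
    exact_mod_cast h'.symm
  have h3 : ((2*k+2).choose (k+1) : ℚ) * (k+1) = (2*(k:ℚ)+2) * ((2*k+1).choose (k+1) : ℚ) := by
    have hsym := Nat.choose_symm_half k
    have h := Nat.add_one_mul_choose_eq (2*k+1) k
    have h' : (2*k+2) * (2*k+1).choose k = (2*k+2).choose (k+1) * (k+1) := by
      simpa [Nat.succ_eq_add_one] using h
    rw [← hsym] at h'
    exact_mod_cast h'.symm
  have hk : ((k:ℚ)+1) ≠ 0 := by positivity
  apply mul_right_cancel₀ hk
  apply mul_right_cancel₀ hk
  linear_combination ((k:ℚ)+1) * h3 + (2*(k:ℚ)+2) * h2 + 2*(2*(k:ℚ)+1)*((k:ℚ)+1) * h1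

lemma sqrtCoeff_succ (k : ℕ) : sqrtCoeff (k+1)
    = (-1)^k * (pathCount (2*k) 0 : ℚ) / 2^(2*k+1) := by
  have hN : (pathCount (2*k) 0 : ℚ) = ((2*k).choose k : ℚ) - ((2*k).choose (k+1) : ℚ) := by
    exact_mod_cast pathCount_closed (2*k) 0 k (by omega)
  unfold sqrtCoeff
  rw [show 2*(k+1) = 2*k+2 by ring, choose_key k, hN]
  have h4 : (4:ℚ)^(k+1) = 2^(2*k+2) := by
    rw [show (4:ℚ) = 2^2 by norm_num, ← pow_mul, show 2*(k+1) = 2*k+2 from by ring]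
  rw [h4]
  push_cast
  rw [show (2:ℚ) * ((k:ℚ)+1) - 1 = 2*(k:ℚ)+1 by ring]
  rw [div_eq_div_iff (by positivity) (by positivity)]
  ring

lemma gram_det_ne_zero (p e K : ℕ) (hK : ∀ i, i < p → 2*i + e < K) :
    (Matrix.of fun i j : Fin p =>
      ∑ h ∈ range K, (pathCount (2*i.val+e) h : ℚ) * (pathCount (2*j.val+e) h : ℚ)).det ≠ 0 := by
  set A : Fin p → ℕ → ℚ := fun i h => (pathCount (2*i.val+e) h : ℚ) with hA
  set M : Matrix (Fin p) (Fin p) ℚ :=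
    Matrix.of (fun i j : Fin p => ∑ h ∈ range K, A i h * A j h) with hM
  intro hdet
  obtain ⟨v, hv0, hv⟩ := Matrix.exists_mulVec_eq_zero_iff.mpr hdet
  set w : ℕ → ℚ := fun h => ∑ i : Fin p, v i * A i h with hw
  have hrow : ∀ i, ∑ j : Fin p, M i j * v j = 0 := by
    intro i
    have := congrFun hv i
    simpa [Matrix.mulVec, dotProduct] using this
  have hsum : ∑ h ∈ range K, (w h)^2 = 0 := by
    calc ∑ h ∈ range K, (w h)^2
        = ∑ h ∈ range K, ∑ i : Fin p, ∑ j : Fin p, (v i * A i h) * (v j * A j h) := by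
          refine Finset.sum_congr rfl fun h _ => ?_
          rw [sq, hw, Finset.sum_mul_sum]
      _ = ∑ i : Fin p, ∑ h ∈ range K, ∑ j : Fin p, (v i * A i h) * (v j * A j h) :=
          Finset.sum_comm
      _ = ∑ i : Fin p, ∑ j : Fin p, ∑ h ∈ range K, (v i * A i h) * (v j * A j h) := by
          exact Finset.sum_congr rfl fun i _ => Finset.sum_comm
      _ = ∑ i : Fin p, v i * ∑ j : Fin p, M i j * v j := by
          refine Finset.sum_congr rfl fun i _ => ?_
          rw [Finset.mul_sum]
          refine Finset.sum_congr rfl fun j _ => ?_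
          rw [hM, Matrix.of_apply, Finset.sum_mul, Finset.mul_sum]
          refine Finset.sum_congr rfl fun h _ => ?_
          ring
      _ = 0 := by simp [hrow]
  have hwz : ∀ h, h ∈ range K → w h = 0 := by
    intro h hh
    have := (Finset.sum_eq_zero_iff_of_nonneg (fun x _ => sq_nonneg (w x))).mp hsum h hh
    exact pow_eq_zero_iff (two_ne_zero) |>.mp this
  have hAdiag : ∀ i : Fin p, A i (2*i.val+e) = 1 := by
    intro i; rw [hA]; simp [pathCount_diag]
  have hvz : ∀ t : ℕ, ∀ i : Fin p, p ≤ i.val + 1 + t → v i = 0 := by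
    intro t
    induction t with
    | zero =>
      intro i hi
      have h1 : w (2*i.val+e) = v i := by
        show ∑ j : Fin p, v j * A j (2*i.val+e) = v i
        rw [Finset.sum_eq_single i]
        · rw [hAdiag, mul_one]
        · intro j _ hji
          have hj : j.val < i.val := by
            have h2 := j.2
            have := Fin.val_ne_of_ne hji
            omega
          rw [hA]
          simp only
          rw [pathCount_eq_zero _ _ (by omega), Nat.cast_zero, mul_zero]
        · intro hnot; exact absurd (Finset.mem_univ i) hnot
      rw [← h1]
      exact hwz _ (Finset.mem_range.mpr (hK i.val i.2))
    | succ t ih =>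
      intro i hi
      have h1 : w (2*i.val+e) = v i := by
        show ∑ j : Fin p, v j * A j (2*i.val+e) = v i
        rw [Finset.sum_eq_single i]
        · rw [hAdiag, mul_one]
        · intro j _ hji
          rcases lt_or_gt_of_ne (Fin.val_ne_of_ne hji) with hlt | hgt
          · rw [hA]
            simp only
            rw [pathCount_eq_zero _ _ (by omega), Nat.cast_zero, mul_zero]
          · rw [ih j (by omega), zero_mul]
        · intro hnot; exact absurd (Finset.mem_univ i) hnot
      rw [← h1]
      exact hwz _ (Finset.mem_range.mpr (hK i.val i.2))
  exact hv0 (funext fun i => hvz p i (by omega))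

lemma det_sqrtCoeff_ne_zero (p e : ℕ) :
    (Matrix.of fun i j : Fin p => sqrtCoeff (i.val + j.val + e + 1)).det ≠ 0 := by
  set K := 4*p + 2*e with hK
  set r : Fin p → ℚ := fun i => (-1)^(i:ℕ) * (2:ℚ)⁻¹^(2*(i:ℕ)+e) with hr
  set G : Matrix (Fin p) (Fin p) ℚ := Matrix.of (fun i j : Fin p =>
     ∑ h ∈ range (K+1), (pathCount (2*i.val+e) h : ℚ) * (pathCount (2*j.val+e) h : ℚ)) with hG
  have hMeq : (Matrix.of fun i j : Fin p => sqrtCoeff (i.val + j.val + e + 1))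
      = Matrix.diagonal r * (((-1)^e * (2:ℚ)⁻¹) • G) * Matrix.diagonal r := by
    ext i j
    rw [Matrix.mul_diagonal, Matrix.diagonal_mul, Matrix.smul_apply, smul_eq_mul]
    have hg := pathCount_gram (2*i.val+e) (2*j.val+e) K
      (by have hi := i.2; have hj := j.2; omega)
    have hGij : G i j = ((pathCount ((2*i.val+e) + (2*j.val+e)) 0 : ℕ) : ℚ) := by
      rw [hG, Matrix.of_apply, ← hg]
      push_cast
      rfl
    simp only [Matrix.of_apply]
    rw [hGij, sqrtCoeff_succ (i.val+j.val+e),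
      show 2*(i.val+j.val+e) = (2*i.val+e) + (2*j.val+e) by ring, hr]
    simp only
    rw [div_eq_mul_inv, ← inv_pow]
    ring
  rw [hMeq, Matrix.det_mul, Matrix.det_mul, Matrix.det_diagonal, Matrix.det_smul]
  have hr0 : ∀ i : Fin p, r i ≠ 0 := by
    intro i
    rw [hr]
    exact mul_ne_zero (pow_ne_zero _ (by norm_num)) (pow_ne_zero _ (by norm_num))
  have hG0 : G.det ≠ 0 := gram_det_ne_zero p e (K+1) (fun i hi => by omega)
  apply mul_ne_zero
  apply mul_ne_zero
  · exact Finset.prod_ne_zero_iff.mpr fun i _ => hr0 i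
  · apply mul_ne_zero
    · exact pow_ne_zero _ (mul_ne_zero (pow_ne_zero _ (by norm_num)) (by norm_num))
    · exact hG0
  · exact Finset.prod_ne_zero_iff.mpr fun i _ => hr0 i

/-- the "companion" polynomial whose coefficients are products of square-root coefficients -/
noncomputable def gpoly (k : ℕ) : Polynomial ℝ :=
  ∑ u ∈ range (k+1), Polynomial.C ((sqrtCoeff u : ℝ) * (sqrtCoeff (k-u) : ℝ)) * Polynomial.X ^ u

noncomputable def cpoly (p e : ℕ) : Polynomial ℝ :=
  (Matrix.of fun i j : Fin p => gpoly (i.val + j.val + e + 1)).det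

lemma term_natDegree_le (c a b : ℝ) (u v : ℕ) :
    (Polynomial.C c * (Polynomial.C a - Polynomial.X)^u
      * (Polynomial.C b - Polynomial.X)^v).natDegree ≤ u + v := by
  have ha : (Polynomial.C a - Polynomial.X : Polynomial ℝ).natDegree ≤ 1 := by
    apply (Polynomial.natDegree_sub_le _ _).trans
    simp
  have hb : (Polynomial.C b - Polynomial.X : Polynomial ℝ).natDegree ≤ 1 := by
    apply (Polynomial.natDegree_sub_le _ _).trans
    simp
  have h1 : (Polynomial.C c * (Polynomial.C a - Polynomial.X)^u).natDegree ≤ u := by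
    apply (Polynomial.natDegree_mul_le).trans
    have := (Polynomial.natDegree_pow_le
      (p := (Polynomial.C a - Polynomial.X : Polynomial ℝ)) (n := u)).trans
      (Nat.mul_le_mul_left u ha)
    simpa using this
  have h2 : ((Polynomial.C b - Polynomial.X : Polynomial ℝ)^v).natDegree ≤ v := by
    have := (Polynomial.natDegree_pow_le
      (p := (Polynomial.C b - Polynomial.X : Polynomial ℝ)) (n := v)).trans
      (Nat.mul_le_mul_left v hb)
    simpa using this
  exact (Polynomial.natDegree_mul_le).trans (add_le_add h1 h2)

lemma coeff_pow_sub (c : ℝ) (u : ℕ) :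
    ((Polynomial.C c - Polynomial.X)^u).coeff u = (-1)^u := by
  have h : (Polynomial.C c - Polynomial.X) = -(Polynomial.X - Polynomial.C c) := by ring
  rw [h, neg_pow]
  have hm : ((Polynomial.X - Polynomial.C c)^u).coeff u = 1 := by
    have hmon := (Polynomial.monic_X_sub_C c).pow u
    have hd : ((Polynomial.X - Polynomial.C c : Polynomial ℝ)^u).natDegree = u := by
      simp [Polynomial.natDegree_pow, Polynomial.natDegree_X_sub_C]
    have := hmon.coeff_natDegree
    rwa [hd] at this
  rw [show ((-1 : Polynomial ℝ)^u) = Polynomial.C ((-1:ℝ)^u) by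
      rw [map_pow, map_neg, map_one],
    Polynomial.coeff_C_mul, hm, mul_one]

lemma term_coeff (c a b : ℝ) (u v : ℕ) :
    (Polynomial.C c * (Polynomial.C a - Polynomial.X)^u
      * (Polynomial.C b - Polynomial.X)^v).coeff (u+v) = c * (-1)^u * (-1)^v := by
  have h1 : (Polynomial.C c * (Polynomial.C a - Polynomial.X)^u).natDegree ≤ u := by
    have := term_natDegree_le c a b u 0
    simpa using this
  have h2 : ((Polynomial.C b - Polynomial.X : Polynomial ℝ)^v).natDegree ≤ v := by
    have := term_natDegree_le (1:ℝ) b b 0 v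
    simpa using this
  rw [Polynomial.coeff_mul_add_eq_of_natDegree_le h1 h2,
    Polynomial.coeff_C_mul, coeff_pow_sub, coeff_pow_sub, mul_assoc]

lemma natDegree_Bpoly_le (a b : ℝ) (k : ℕ) : (Bpoly a b k).natDegree ≤ k := by
  apply Polynomial.natDegree_sum_le_of_forall_le
  intro u hu
  apply Polynomial.natDegree_sum_le_of_forall_le
  intro v hv
  refine (term_natDegree_le _ _ _ _ _).trans ?_
  simp only [Finset.mem_range] at hu hv
  omega

lemma coeff_Bpoly (a b : ℝ) (k : ℕ) :
    (Bpoly a b k).coeff k = ∑ u ∈ range (k+1),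
      (-1)^k * ((sqrtCoeff u : ℝ) * (sqrtCoeff (k-u) : ℝ) * a⁻¹ ^ u * b⁻¹ ^ (k-u)) := by
  unfold Bpoly
  rw [Polynomial.finset_sum_coeff]
  refine Finset.sum_congr rfl fun u hu => ?_
  rw [Polynomial.finset_sum_coeff]
  have hu' : u ≤ k := by
    have := Finset.mem_range.mp hu
    omega
  rw [Finset.sum_eq_single_of_mem (k-u) (Finset.mem_range.mpr (by omega))
      (fun v hv hne => Polynomial.coeff_eq_zero_of_natDegree_lt
        ((term_natDegree_le _ _ _ _ _).trans_lt
          (by have := Finset.mem_range.mp hv; omega)))]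
  obtain ⟨w, rfl⟩ : ∃ w, k = u + w := ⟨k-u, by omega⟩
  rw [show u + w - u = w from by omega, show w - w = 0 from by omega, sqrtCoeff_zero]
  rw [term_coeff]
  push_cast
  ring

lemma coeff_Bpoly_eval (a b : ℝ) (ha : a ≠ 0) (hb : b ≠ 0) (k : ℕ) :
    (Bpoly a b k).coeff k = (-1)^k * b⁻¹ ^ k * (gpoly k).eval (b/a) := by
  rw [coeff_Bpoly, gpoly, Polynomial.eval_finset_sum, Finset.mul_sum]
  refine Finset.sum_congr rfl fun u hu => ?_
  have hu' : u ≤ k := by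
    have := Finset.mem_range.mp hu
    omega
  simp only [Polynomial.eval_mul, Polynomial.eval_C, Polynomial.eval_pow, Polynomial.eval_X]
  have hsplit : (b⁻¹:ℝ) ^ (k-u) = b⁻¹^k * b^u := by
    rw [pow_sub₀ b⁻¹ (inv_ne_zero hb) hu']
    simp only [inv_pow, div_eq_mul_inv, inv_inv]
  rw [hsplit, div_eq_mul_inv, mul_pow]
  ring

lemma gpoly_eval_zero (k : ℕ) : (gpoly k).eval 0 = (sqrtCoeff k : ℝ) := by
  rw [gpoly, Polynomial.eval_finset_sum]
  rw [Finset.sum_eq_single_of_mem 0 (Finset.mem_range.mpr (by omega))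
      (fun u _ hne => by simp [zero_pow hne])]
  simp [sqrtCoeff_zero]

lemma cpoly_ne_zero (p e : ℕ) : cpoly p e ≠ 0 := by
  intro h
  have h0 : (Polynomial.evalRingHom (0:ℝ))
        ((Matrix.of fun i j : Fin p => gpoly (i.val + j.val + e + 1)).det)
      = (Rat.castHom ℝ) ((Matrix.of fun i j : Fin p => sqrtCoeff (i.val + j.val + e + 1)).det) := by
    rw [RingHom.map_det, RingHom.map_det]
    congr 1
    ext i j
    simp [RingHom.mapMatrix_apply, Matrix.map_apply, gpoly_eval_zero]
  rw [cpoly] at h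
  rw [h, map_zero] at h0
  refine det_sqrtCoeff_ne_zero p e ?_
  have h1 := h0.symm
  rwa [map_eq_zero_iff _ (Rat.cast_injective)] at h1

lemma coeff_prod_at {ι : Type*} (s : Finset ι) (f : ι → Polynomial ℝ) (d : ι → ℕ)
    (h : ∀ i ∈ s, (f i).natDegree ≤ d i) :
    (∏ i ∈ s, f i).coeff (∑ i ∈ s, d i) = ∏ i ∈ s, (f i).coeff (d i) := by
  induction s using Finset.cons_induction with
  | empty => simp
  | cons a s ha ih =>
    rw [Finset.prod_cons, Finset.sum_cons,
      Polynomial.coeff_mul_add_eq_of_natDegree_le (h a (Finset.mem_cons_self a s))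
        ((Polynomial.natDegree_prod_le _ _).trans
          (Finset.sum_le_sum (fun i hi => h i (Finset.mem_cons_of_mem hi)))),
      ih (fun i hi => h i (Finset.mem_cons_of_mem hi)), Finset.prod_cons]

set_option maxHeartbeats 1000000 in
lemma det_Bpoly_natDegree (p e : ℕ) :
    ∃ R : Finset ℝ, ∀ a b : ℝ, a ≠ 0 → b ≠ 0 → a / b ∉ R →
      (Matrix.det (Matrix.of fun i j : Fin p => Bpoly a b (i.val + j.val + e + 1))).natDegree
        = p * (p + e) := by
  refine ⟨(cpoly p e).roots.toFinset.image (fun x => x⁻¹), ?_⟩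
  intro a b ha hb hR
  have heval : (cpoly p e).eval (b/a) ≠ 0 := by
    intro h
    apply hR
    have hba : (b/a) ∈ (cpoly p e).roots := by
      rw [Polynomial.mem_roots (cpoly_ne_zero p e)]
      exact h
    refine Finset.mem_image.mpr ⟨b/a, Multiset.mem_toFinset.mpr hba, ?_⟩
    rw [inv_div]
  have hsum : ∀ σ : Equiv.Perm (Fin p),
      ∑ i : Fin p, (((σ i) : ℕ) + (i : ℕ) + e + 1) = p*(p+e) := by
    intro σ
    have h1 : ∑ i : Fin p, ((σ i):ℕ) = ∑ i : Fin p, (i:ℕ) := Equiv.sum_comp σ (fun i => (i:ℕ))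
    have h2 : (∑ i ∈ range p, i) * 2 = p * (p-1) := Finset.sum_range_id_mul_two p
    simp only [Finset.sum_add_distrib, Finset.sum_const, Finset.card_univ, Fintype.card_fin,
      smul_eq_mul, h1]
    rw [Fin.sum_univ_eq_sum_range (fun i => i) p]
    rcases Nat.eq_zero_or_pos p with hp | hp
    · subst hp; simp
    · obtain ⟨q, rfl⟩ : ∃ q, p = q+1 := ⟨p-1, by omega⟩
      rw [show q+1-1 = q from rfl] at h2
      zify at h2 ⊢
      linear_combination h2
  -- upper bound on degree
  have hub : (Matrix.det (Matrix.of fun i j : Fin p =>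
      Bpoly a b (i.val + j.val + e + 1))).natDegree ≤ p*(p+e) := by
    rw [Matrix.det_apply']
    apply Polynomial.natDegree_sum_le_of_forall_le
    intro σ _
    refine (Polynomial.natDegree_mul_le).trans ?_
    rw [Polynomial.natDegree_intCast, zero_add]
    refine (Polynomial.natDegree_prod_le _ _).trans ?_
    rw [← hsum σ]
    exact Finset.sum_le_sum fun i _ => natDegree_Bpoly_le a b _
  -- the coefficient in top degree
  have hcoeff : (Matrix.det (Matrix.of fun i j : Fin p =>
        Bpoly a b (i.val + j.val + e + 1))).coeff (p*(p+e))
      = (Matrix.of fun i j : Fin p =>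
          (Bpoly a b (i.val + j.val + e + 1)).coeff (i.val + j.val + e + 1)).det := by
    rw [Matrix.det_apply, Matrix.det_apply, Polynomial.finset_sum_coeff]
    refine Finset.sum_congr rfl fun σ _ => ?_
    rw [Units.smul_def, Units.smul_def, Polynomial.coeff_smul]
    congr 1
    have : (∏ i : Fin p, Bpoly a b (((σ i):ℕ) + (i:ℕ) + e + 1)).coeff (p*(p+e))
        = ∏ i : Fin p, (Bpoly a b (((σ i):ℕ) + (i:ℕ) + e + 1)).coeff (((σ i):ℕ) + (i:ℕ) + e + 1) := by
      rw [← hsum σ]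
      exact coeff_prod_at _ _ _ (fun i _ => natDegree_Bpoly_le a b _)
    simpa using this
  -- identify the coefficient matrix determinant with an evaluation of cpoly
  set rr : Fin p → ℝ := fun i => (-1)^(i:ℕ) * b⁻¹^(i:ℕ) with hrr
  set Eev : Matrix (Fin p) (Fin p) ℝ :=
    Matrix.of (fun i j : Fin p => (gpoly (i.val + j.val + e + 1)).eval (b/a)) with hE
  have hLmat : (Matrix.of fun i j : Fin p =>
        (Bpoly a b (i.val + j.val + e + 1)).coeff (i.val + j.val + e + 1))
      = Matrix.diagonal rr * (((-1)^(e+1) * b⁻¹^(e+1)) • Eev) * Matrix.diagonal rr := by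
    ext i j
    rw [Matrix.mul_diagonal, Matrix.diagonal_mul, Matrix.smul_apply, smul_eq_mul]
    simp only [Matrix.of_apply]
    rw [coeff_Bpoly_eval a b ha hb, hrr, hE]
    simp only [Matrix.of_apply]
    ring
  have hEdet : Eev.det = (cpoly p e).eval (b/a) := by
    rw [cpoly, show ((Matrix.of fun i j : Fin p => gpoly (i.val + j.val + e + 1)).det).eval (b/a)
        = (Polynomial.evalRingHom (b/a)) (Matrix.of fun i j : Fin p =>
          gpoly (i.val + j.val + e + 1)).det from rfl, RingHom.map_det]
    congr 1
  have hdetL : (Matrix.of fun i j : Fin p =>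
      (Bpoly a b (i.val + j.val + e + 1)).coeff (i.val + j.val + e + 1)).det ≠ 0 := by
    rw [hLmat, Matrix.det_mul, Matrix.det_mul, Matrix.det_diagonal, Matrix.det_smul, hEdet]
    have hrr0 : ∀ i : Fin p, rr i ≠ 0 := fun i =>
      mul_ne_zero (pow_ne_zero _ (by norm_num)) (pow_ne_zero _ (inv_ne_zero hb))
    apply mul_ne_zero
    apply mul_ne_zero
    · exact Finset.prod_ne_zero_iff.mpr fun i _ => hrr0 i
    · exact mul_ne_zero (pow_ne_zero _ (mul_ne_zero (pow_ne_zero _ (by norm_num))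
        (pow_ne_zero _ (inv_ne_zero hb)))) heval
    · exact Finset.prod_ne_zero_iff.mpr fun i _ => hrr0 i
  refine le_antisymm hub ?_
  apply Polynomial.le_natDegree_of_ne_zero
  rw [hcoeff]
  exact hdetL

/-- Generic degree of Cayley's determinant (Proposition 2.22): for each `n ≥ 3` there is a
finite set `R ⊂ ℝ` such that whenever `a, b ≠ 0` and `a/b ∉ R`, the degree of `𝓑_{a,b}^n`
equals `(n²−1)/4` if `n` is odd and `n²/4 − 1` if `n` is even. -/
theorem cayleyPoly_natDegree_generic (n : ℕ) (hn : 3 ≤ n) :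
    ∃ R : Finset ℝ, ∀ a b : ℝ, a ≠ 0 → b ≠ 0 → a / b ∉ R →
      (cayleyPoly a b n).natDegree = if Odd n then (n ^ 2 - 1) / 4 else n ^ 2 / 4 - 1 := by
  by_cases hodd : Odd n
  · obtain ⟨m, hm⟩ := hodd
    obtain ⟨R, hR⟩ := det_Bpoly_natDegree (n/2) 1
    refine ⟨R, fun a b ha hb hab => ?_⟩
    rw [if_pos ⟨m, hm⟩, cayleyPoly, if_pos ⟨m, hm⟩]
    have hdeg := hR a b ha hb hab
    rw [show (fun (i j : Fin (n/2)) => Bpoly a b (i.val + j.val + 2))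
        = (fun (i j : Fin (n/2)) => Bpoly a b (i.val + j.val + 1 + 1)) from rfl, hdeg]
    have hm2 : n / 2 = m := by omega
    have hn2 : n ^ 2 = 4 * (m * (m + 1)) + 1 := by subst hm; ring
    rw [hm2, hn2, Nat.add_sub_cancel, Nat.mul_div_cancel_left _ (by norm_num)]
  · obtain ⟨m, hm⟩ := (Nat.not_odd_iff_even.mp hodd)
    rw [show m + m = 2 * m from by ring] at hm
    obtain ⟨R, hR⟩ := det_Bpoly_natDegree (n/2 - 1) 2
    refine ⟨R, fun a b ha hb hab => ?_⟩
    rw [if_neg hodd, cayleyPoly, if_neg hodd]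
    have hdeg := hR a b ha hb hab
    rw [show (fun (i j : Fin (n/2 - 1)) => Bpoly a b (i.val + j.val + 3))
        = (fun (i j : Fin (n/2 - 1)) => Bpoly a b (i.val + j.val + 2 + 1)) from rfl, hdeg]
    have hm4 : 4 ≤ n := by
      rcases Nat.lt_or_ge n 4 with h | h
      · interval_cases n
        · exact absurd ⟨1, rfl⟩ hodd
      · exact h
    have hm2 : n / 2 - 1 = m - 1 := by omega
    have hn2 : n ^ 2 = 4 * (m * m) := by subst hm; ring
    rw [hm2, hn2, Nat.mul_div_cancel_left _ (by norm_num)]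
    obtain ⟨q, rfl⟩ : ∃ q, m = q + 1 := ⟨m - 1, by omega⟩
    rw [show q + 1 - 1 = q from rfl]
    have : (q+1) * (q+1) = q * (q + 2) + 1 := by ring
    rw [this, Nat.add_sub_cancel]
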